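/- Let ω_X, ω_Y, η̃_X^ψ, η̃_Y^ψ be formal power series (over ℂ) satisfying the subordination system ω_X(z) = z·η̃_Y^ψ(ω_Y(z)) and ω_Y(z) = z·η̃_X^ψ(ω_X(z)), and let η̃ transforms relate to moment series by M(w) = (1 − w·η̃(w))^{−1}. Define η̃_{XY}(z) by the relation M_{XY}(z) = M_X(ω_X(z)) (subordination). Then η_{XY}(z) := z·η̃_{XY}(z) satisfies η_{XY}(z) = ω_X(z)·η̃_X(ω_X(z)) = η_X(ω_X(z)), and η̃_{XY}(z) = η̃_X(ω_X(z))·η̃_Y(ω_Y(z)). Consequently, setting Σ(u) = η̃(η^{−1}(u)) (where η(z) = z·η̃(z) and η^{−1} is the compositional inverse, assuming η'(0) ≠ 0), one has Σ_{XY}(u) = Σ_X(u)·Σ_Y(u). -/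

import Mathlib

noncomputable section

open PowerSeries

/-- Formal composition `f ∘ g` of power series (intended for `g` with zero
constant term): the `n`-th coefficient is `∑_{k ≤ n} fₖ · [zⁿ](gᵏ)`. -/
def psComp (f g : PowerSeries ℂ) : PowerSeries ℂ :=
  PowerSeries.mk fun n =>
    ∑ k ∈ Finset.range (n + 1),
      PowerSeries.coeff k f * PowerSeries.coeff n (g ^ k)

lemma coeff_psComp (f g : PowerSeries ℂ) (n : ℕ) :
    coeff n (psComp f g) =
      ∑ k ∈ Finset.range (n + 1), coeff k f * coeff n (g ^ k) := by
  simp [psComp]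

lemma coeff_pow_eq_zero {g : PowerSeries ℂ} (hg : constantCoeff g = 0)
    {n k : ℕ} (h : n < k) : coeff n (g ^ k) = 0 := by
  have hd : (X : PowerSeries ℂ) ^ k ∣ g ^ k :=
    pow_dvd_pow_of_dvd (X_dvd_iff.2 hg) k
  exact X_pow_dvd_iff.1 hd n h

lemma coeff_psComp_of_le {g : PowerSeries ℂ} (hg : constantCoeff g = 0)
    (f : PowerSeries ℂ) {n m : ℕ} (hm : n + 1 ≤ m) :
    coeff n (psComp f g) = ∑ k ∈ Finset.range m, coeff k f * coeff n (g ^ k) := by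
  rw [coeff_psComp]
  refine Finset.sum_subset (Finset.range_subset_range.2 hm) fun k _ hk => ?_
  rw [coeff_pow_eq_zero hg (by simpa using hk), mul_zero]

lemma constantCoeff_psComp (f g : PowerSeries ℂ) :
    constantCoeff (psComp f g) = constantCoeff f := by
  have := coeff_psComp f g 0
  simpa using this

lemma coeff_psComp_congr {f f' : PowerSeries ℂ} (g : PowerSeries ℂ) {n : ℕ}
    (h : ∀ k ≤ n, coeff k f = coeff k f') :
    coeff n (psComp f g) = coeff n (psComp f' g) := by
  rw [coeff_psComp, coeff_psComp]
  refine Finset.sum_congr rfl fun k hk => ?_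
  rw [h k (by simpa [Nat.lt_succ_iff] using hk)]

lemma psComp_add (f₁ f₂ g : PowerSeries ℂ) :
    psComp (f₁ + f₂) g = psComp f₁ g + psComp f₂ g := by
  ext n
  simp [coeff_psComp, add_mul, Finset.sum_add_distrib]

lemma psComp_sub (f₁ f₂ g : PowerSeries ℂ) :
    psComp (f₁ - f₂) g = psComp f₁ g - psComp f₂ g := by
  ext n
  simp [coeff_psComp, sub_mul, Finset.sum_sub_distrib]

lemma psComp_C (a : ℂ) (g : PowerSeries ℂ) : psComp (C a) g = C a := by
  ext n
  rw [coeff_psComp]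
  rcases Nat.eq_zero_or_pos n with rfl | hn
  · simp
  · rw [Finset.sum_eq_single 0]
    · simp [coeff_C, Nat.pos_iff_ne_zero.1 hn]
    · intro k _ hk
      simp [coeff_C, hk]
    · simp
  
lemma psComp_one (g : PowerSeries ℂ) : psComp 1 g = 1 := by
  have := psComp_C 1 g
  simpa using this

lemma psComp_X_right (f : PowerSeries ℂ) : psComp f X = f := by
  ext n
  rw [coeff_psComp, Finset.sum_eq_single n]
  · simp
  · intro k hk hkn
    simp [coeff_X_pow, hkn, Ne.symm hkn]
  · simp

lemma psComp_X_left {g : PowerSeries ℂ} (hg : constantCoeff g = 0) :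
    psComp X g = g := by
  ext n
  rcases Nat.eq_zero_or_pos n with rfl | hn
  · simp [coeff_psComp, hg]
  · rw [coeff_psComp, Finset.sum_eq_single 1]
    · simp
    · intro k hk hk1
      rcases k with _ | k
      · simp
      · simp [coeff_X, show k ≠ 0 by omega]
    · intro h; exact absurd (Finset.mem_range.2 (by omega)) h

lemma coeff_aeval {g : PowerSeries ℂ} (hg : constantCoeff g = 0)
    (P : Polynomial ℂ) (n : ℕ) :
    coeff n (Polynomial.aeval g P) =
      ∑ k ∈ Finset.range (n + 1), P.coeff k * coeff n (g ^ k) := by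
  set N := max (n + 1) (P.natDegree + 1) with hN
  rw [Polynomial.aeval_eq_sum_range' (lt_of_lt_of_le (Nat.lt_succ_self _) (le_max_right _ _)) g]
  rw [map_sum]
  have : ∀ k ∈ Finset.range N, coeff n (P.coeff k • g ^ k) = P.coeff k * coeff n (g ^ k) := by
    intro k _; rw [coeff_smul]; simp [smul_eq_mul]
  rw [Finset.sum_congr rfl this]
  symm
  refine Finset.sum_subset (Finset.range_subset_range.2 (le_max_left _ _)) fun k _ hk => ?_
  rw [coeff_pow_eq_zero hg (by simpa using hk), mul_zero]

lemma psComp_coe {g : PowerSeries ℂ} (hg : constantCoeff g = 0) (P : Polynomial ℂ) :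
    psComp (P : PowerSeries ℂ) g = Polynomial.aeval g P := by
  ext n
  rw [coeff_psComp, coeff_aeval hg]
  exact Finset.sum_congr rfl fun k _ => by rw [Polynomial.coeff_coe]

lemma psComp_mul {g : PowerSeries ℂ} (hg : constantCoeff g = 0) (f₁ f₂ : PowerSeries ℂ) :
    psComp (f₁ * f₂) g = psComp f₁ g * psComp f₂ g := by
  ext n
  set P₁ := trunc (n + 1) f₁ with hP₁
  set P₂ := trunc (n + 1) f₂ with hP₂
  have hcoe : ∀ (f : PowerSeries ℂ) (P : Polynomial ℂ), P = trunc (n+1) f →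
      ∀ k ≤ n, coeff k f = coeff k (P : PowerSeries ℂ) := by
    intro f P hP k hk
    rw [hP, Polynomial.coeff_coe, coeff_trunc, if_pos (by omega)]
  have h1 : ∀ k ≤ n, coeff k (f₁ * f₂) = coeff k ((P₁ : PowerSeries ℂ) * (P₂ : PowerSeries ℂ)) := by
    intro k hk
    rw [coeff_mul, coeff_mul]
    refine Finset.sum_congr rfl fun p hp => ?_
    have hp1 : p.1 ≤ n := le_trans (Finset.HasAntidiagonal.antidiagonal.fst_le hp) hk
    have hp2 : p.2 ≤ n := le_trans (Finset.HasAntidiagonal.antidiagonal.snd_le hp) hk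
    rw [hcoe f₁ P₁ hP₁ p.1 hp1, hcoe f₂ P₂ hP₂ p.2 hp2]
  have step1 : coeff n (psComp (f₁ * f₂) g)
      = coeff n (psComp ((P₁ : PowerSeries ℂ) * (P₂ : PowerSeries ℂ)) g) := by
    refine coeff_psComp_congr g fun k hk => ?_
    exact h1 k hk
  have step2 : psComp ((P₁ : PowerSeries ℂ) * (P₂ : PowerSeries ℂ)) g
      = psComp (P₁ : PowerSeries ℂ) g * psComp (P₂ : PowerSeries ℂ) g := by
    have : ((P₁ : PowerSeries ℂ) * (P₂ : PowerSeries ℂ)) = ((P₁ * P₂ : Polynomial ℂ) : PowerSeries ℂ) := by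
      push_cast; ring
    rw [this, psComp_coe hg, psComp_coe hg, psComp_coe hg, map_mul]
  have step3 : coeff n (psComp (P₁ : PowerSeries ℂ) g * psComp (P₂ : PowerSeries ℂ) g)
      = coeff n (psComp f₁ g * psComp f₂ g) := by
    rw [coeff_mul, coeff_mul]
    refine Finset.sum_congr rfl fun p hp => ?_
    have hp1 : p.1 ≤ n := Finset.HasAntidiagonal.antidiagonal.fst_le hp
    have hp2 : p.2 ≤ n := Finset.HasAntidiagonal.antidiagonal.snd_le hp
    rw [coeff_psComp_congr g (fun k hk => (hcoe f₁ P₁ hP₁ k (le_trans hk hp1)).symm),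
        coeff_psComp_congr g (fun k hk => (hcoe f₂ P₂ hP₂ k (le_trans hk hp2)).symm)]
  rw [step1, step2, step3]

lemma psComp_pow {g : PowerSeries ℂ} (hg : constantCoeff g = 0) (f : PowerSeries ℂ) (m : ℕ) :
    psComp (f ^ m) g = psComp f g ^ m := by
  induction m with
  | zero => simpa using psComp_one g
  | succ m ih => rw [pow_succ, psComp_mul hg, ih, pow_succ]

lemma psComp_assoc {g h : PowerSeries ℂ} (hg : constantCoeff g = 0)
    (hh : constantCoeff h = 0) (f : PowerSeries ℂ) :
    psComp (psComp f g) h = psComp f (psComp g h) := by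
  have hgh : constantCoeff (psComp g h) = 0 := by
    rw [constantCoeff_psComp]; exact hg
  have key : ∀ P : Polynomial ℂ,
      psComp (psComp (P : PowerSeries ℂ) g) h = psComp (P : PowerSeries ℂ) (psComp g h) := by
    intro P
    induction P using Polynomial.induction_on' with
    | add p q hp hq =>
      push_cast
      rw [psComp_add, psComp_add, psComp_add, hp, hq]
    | monomial m a =>
      have : ((Polynomial.monomial m a : Polynomial ℂ) : PowerSeries ℂ)
          = C a * X ^ m := by
        rw [Polynomial.coe_monomial]
        ext k
        simp [coeff_monomial, coeff_X_pow, coeff_C_mul, mul_comm, eq_comm]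
      rw [this, psComp_mul hg, psComp_mul hgh, psComp_C, psComp_C,
          psComp_pow hg, psComp_pow hgh, psComp_X_left hg,
          psComp_mul hh, psComp_C, psComp_pow hh, psComp_X_left hgh]
  ext n
  set P := trunc (n + 1) f with hP
  have hcf : ∀ k ≤ n, coeff k f = coeff k (P : PowerSeries ℂ) := by
    intro k hk
    rw [hP, Polynomial.coeff_coe, coeff_trunc, if_pos (by omega)]
  have L : coeff n (psComp (psComp f g) h)
      = coeff n (psComp (psComp (P : PowerSeries ℂ) g) h) := by
    refine coeff_psComp_congr h fun k hk => ?_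
    exact coeff_psComp_congr g fun j hj => hcf j (le_trans hj hk)
  have R : coeff n (psComp f (psComp g h))
      = coeff n (psComp (P : PowerSeries ℂ) (psComp g h)) :=
    coeff_psComp_congr (psComp g h) fun k hk => hcf k hk
  rw [L, R, key P]

/-- multiplicativity of the Popa–Wang `Σ`-transform.  Given
formal power series satisfying the subordination system
`ω_X = z·η̃_Y(ω_Y)`, `ω_Y = z·η̃_X(ω_X)`, with `η_X = z·η̃_X`, `η_Y = z·η̃_Y`,
moment series `M = (1 − η)⁻¹`, and `η_{XY}` defined through the subordination
relation `M_{XY} = M_X ∘ ω_X` (i.e. `(M_X ∘ ω_X)·(1 − η_{XY}) = 1`), one has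
`η_{XY} = η_X ∘ ω_X`, `η̃_{XY} = (η̃_X ∘ ω_X)·(η̃_Y ∘ ω_Y)`, and, with
`inv` denoting compositional inverses of the `η`'s,
`Σ_{XY} = Σ_X · Σ_Y` where `Σ = η̃ ∘ η⁻¹`. -/
theorem sigma_transform_multiplicative
    (etX etY etXY ωX ωY ηX ηY ηXY invX invY invXY : PowerSeries ℂ)
    (hηX : ηX = PowerSeries.X * etX) (hηY : ηY = PowerSeries.X * etY)
    (hωX : ωX = PowerSeries.X * psComp etY ωY)
    (hωY : ωY = PowerSeries.X * psComp etX ωX)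
    (hηXY0 : constantCoeff ηXY = 0)
    (hηXY : ηXY = PowerSeries.X * etXY)
    (hMXY : psComp ((1 - ηX)⁻¹) ωX * (1 - ηXY) = 1)
    (hinvX0 : constantCoeff invX = 0)
    (hinvY0 : constantCoeff invY = 0)
    (hinvXY0 : constantCoeff invXY = 0)
    (hinvX : psComp ηX invX = PowerSeries.X ∧ psComp invX ηX = PowerSeries.X)
    (hinvY : psComp ηY invY = PowerSeries.X ∧ psComp invY ηY = PowerSeries.X)
    (hinvXY : psComp ηXY invXY = PowerSeries.X ∧
      psComp invXY ηXY = PowerSeries.X) :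
    ηXY = psComp ηX ωX ∧
    etXY = psComp etX ωX * psComp etY ωY ∧
    psComp etXY invXY = psComp etX invX * psComp etY invY := by
  have hetX0 : constantCoeff ηX = 0 := by rw [hηX]; simp
  have hetY0 : constantCoeff ηY = 0 := by rw [hηY]; simp
  have hωX0 : constantCoeff ωX = 0 := by rw [hωX]; simp
  have hωY0 : constantCoeff ωY = 0 := by rw [hωY]; simp
  -- Claim 1
  have hA : psComp ((1 - ηX)⁻¹) ωX * (1 - psComp ηX ωX) = 1 := by
    have hunit : constantCoeff (1 - ηX) ≠ 0 := by
      rw [map_sub, map_one, hetX0, sub_zero]; exact one_ne_zero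
    calc psComp ((1 - ηX)⁻¹) ωX * (1 - psComp ηX ωX)
        = psComp ((1 - ηX)⁻¹) ωX * psComp (1 - ηX) ωX := by
          rw [psComp_sub, psComp_one]
      _ = psComp ((1 - ηX)⁻¹ * (1 - ηX)) ωX := (psComp_mul hωX0 _ _).symm
      _ = 1 := by rw [PowerSeries.inv_mul_cancel _ hunit, psComp_one]
  have hAne : psComp ((1 - ηX)⁻¹) ωX ≠ 0 := left_ne_zero_of_mul_eq_one hMXY
  have h1 : ηXY = psComp ηX ωX := by
    have h := mul_left_cancel₀ hAne (hMXY.trans hA.symm)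
    linear_combination -h
  -- Claim 2
  have h2 : etXY = psComp etX ωX * psComp etY ωY := by
    apply mul_left_cancel₀ (X_ne_zero : (X : PowerSeries ℂ) ≠ 0)
    calc X * etXY = ηXY := hηXY.symm
      _ = psComp ηX ωX := h1
      _ = psComp X ωX * psComp etX ωX := by rw [hηX, psComp_mul hωX0]
      _ = ωX * psComp etX ωX := by rw [psComp_X_left hωX0]
      _ = X * (psComp etX ωX * psComp etY ωY) := by rw [hωX]; ring
  -- Claim 3
  have hηYωY : psComp ηY ωY = ηXY := by
    rw [hηY, psComp_mul hωY0, psComp_X_left hωY0, hηXY, h2, hωY]; ring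
  have hsub : ∀ (ω η inv' : PowerSeries ℂ), constantCoeff ω = 0 →
      constantCoeff η = 0 → psComp η ω = ηXY →
      psComp inv' η = PowerSeries.X → psComp ω invXY = inv' := by
    intro ω η inv' hω0 hη0 hcomp hinv'
    have hw0 : constantCoeff (psComp ω invXY) = 0 := by
      rw [constantCoeff_psComp]; exact hω0
    calc psComp ω invXY
        = psComp X (psComp ω invXY) := (psComp_X_left hw0).symm
      _ = psComp (psComp inv' η) (psComp ω invXY) := by rw [hinv']
      _ = psComp inv' (psComp η (psComp ω invXY)) := psComp_assoc hη0 hw0 _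
      _ = psComp inv' (psComp (psComp η ω) invXY) := by
          rw [psComp_assoc hω0 hinvXY0]
      _ = psComp inv' X := by rw [hcomp, hinvXY.1]
      _ = inv' := psComp_X_right _
  have hX : psComp ωX invXY = invX := hsub ωX ηX invX hωX0 hetX0 h1.symm hinvX.2
  have hY : psComp ωY invXY = invY := hsub ωY ηY invY hωY0 hetY0 hηYωY hinvY.2
  refine ⟨h1, h2, ?_⟩
  rw [h2, psComp_mul hinvXY0, psComp_assoc hωX0 hinvXY0, psComp_assoc hωY0 hinvXY0, hX, hY]
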